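/- If X is a compact metric space admitting an (n+1, n)-expansive homeomorphism with n ≥ 3, then X is a finite set. -/

import Mathlib

open Set Filter Topology

variable {X : Type*} [MetricSpace X]

/-- The `k`-th iterate (`k ∈ ℤ`) of a homeomorphism, as a function. -/
noncomputable def hiter (f : X ≃ₜ X) (k : ℤ) : X → X := ⇑(f.toEquiv ^ k)

lemma hiter_add (f : X ≃ₜ X) (j k : ℤ) (x : X) : hiter f (j + k) x = hiter f j (hiter f k x) := by
  unfold hiter; rw [zpow_add]; rfl

lemma hiter_zero (f : X ≃ₜ X) (x : X) : hiter f 0 x = x := by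
  unfold hiter; rw [zpow_zero]; rfl

lemma hiter_injective (f : X ≃ₜ X) (k : ℤ) : Function.Injective (hiter f k) :=
  (f.toEquiv ^ k).injective

lemma hiter_natCast (f : X ≃ₜ X) (n : ℕ) : hiter f (n : ℤ) = (⇑f)^[n] := by
  unfold hiter; rw [zpow_natCast, Equiv.Perm.coe_pow]; rfl

lemma hiter_neg_natCast (f : X ≃ₜ X) (n : ℕ) : hiter f (-(n : ℤ)) = (⇑f.symm)^[n] := by
  unfold hiter
  rw [zpow_neg, ← inv_zpow, zpow_natCast, Equiv.Perm.coe_pow]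
  rfl

lemma continuous_hiter (f : X ≃ₜ X) (k : ℤ) : Continuous (hiter f k) := by
  rcases le_or_gt 0 k with h | h
  · obtain ⟨n, rfl⟩ := Int.eq_ofNat_of_zero_le h
    rw [hiter_natCast]
    exact f.continuous.iterate n
  · obtain ⟨n, rfl⟩ : ∃ n : ℕ, k = -(n:ℤ) := ⟨k.natAbs, by omega⟩
    rw [hiter_neg_natCast]
    exact f.symm.continuous.iterate n

lemma hiter_symm (f : X ≃ₜ X) (k : ℤ) : hiter f.symm k = hiter f (-k) := by
  unfold hiter
  rw [show f.symm.toEquiv = f.toEquiv⁻¹ from rfl, inv_zpow, zpow_neg]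

lemma finite_of_separated [CompactSpace X] (η : ℝ) (hη : 0 < η)
    (h : ∀ x y : X, x ≠ y → η ≤ dist x y) : Finite X := by
  obtain ⟨t, _, htf, hcov⟩ := finite_cover_balls_of_compact (isCompact_univ (X := X))
    (show (0:ℝ) < η/2 by linarith)
  have hx : ∀ x : X, ∃ c ∈ t, x ∈ Metric.ball c (η/2) := by
    intro x
    have := hcov (mem_univ x); simpa using this
  choose c hc hbc using hx
  haveI : Finite ↑t := htf.to_subtype
  refine Finite.of_injective (fun x => (⟨c x, hc x⟩ : ↑t)) ?_
  intro x y hxy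
  simp only [Subtype.mk.injEq] at hxy
  by_contra hne
  have hxb := hbc x; have hyb := hbc y
  rw [Metric.mem_ball] at hxb hyb
  have h2 : dist (c x) y < η/2 := by rw [hxy, dist_comm]; exact hyb
  have h3 := dist_triangle x (c x) y
  linarith [h x y hne]

lemma exists_close_pair [CompactSpace X] (hX : ¬ Finite X) (ε : ℝ) (hε : 0 < ε) :
    ∃ x y : X, x ≠ y ∧ dist x y < ε := by
  by_contra hcon
  push_neg at hcon
  exact hX (finite_of_separated ε hε fun x y hxy => hcon x y hxy)

lemma ucont_hiter [CompactSpace X] (f : X ≃ₜ X) (k : ℤ) (ε : ℝ) (hε : 0 < ε) :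
    ∃ η > 0, ∀ x y : X, dist x y ≤ η → dist (hiter f k x) (hiter f k y) ≤ ε := by
  have huc : UniformContinuous (hiter f k) :=
    CompactSpace.uniformContinuous_of_continuous (continuous_hiter f k)
  rw [Metric.uniformContinuous_iff] at huc
  obtain ⟨η, hη, h⟩ := huc ε hε
  exact ⟨η/2, by linarith, fun x y hxy => le_of_lt (h (lt_of_le_of_lt hxy (by linarith)))⟩

lemma unif_exp [CompactSpace X] (g : X ≃ₜ X) (δ : ℝ)
    (hexp : ∀ x y : X, x ≠ y → ∃ j : ℕ, δ < dist (hiter g (j:ℤ) x) (hiter g (j:ℤ) y))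
    (ε : ℝ) (hε : 0 < ε) :
    ∃ N : ℕ, ∀ x y : X, ε ≤ dist x y → ∃ j ≤ N, δ < dist (hiter g (j:ℤ) x) (hiter g (j:ℤ) y) := by
  by_contra hcon
  push_neg at hcon
  choose u v h1 h2 using hcon
  obtain ⟨⟨a, b⟩, -, φ, hφ, hconv⟩ := (isCompact_univ (X := X × X)).tendsto_subseq
    (x := fun N => (u N, v N)) (fun n => mem_univ _)
  have ha : Tendsto (fun n => u (φ n)) atTop (𝓝 a) := hconv.fst_nhds
  have hb : Tendsto (fun n => v (φ n)) atTop (𝓝 b) := hconv.snd_nhds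
  have hd : ε ≤ dist a b := ge_of_tendsto' (ha.dist hb) fun n => h1 (φ n)
  have hab : a ≠ b := by
    intro h; rw [h, dist_self] at hd; linarith
  have hall : ∀ j : ℕ, dist (hiter g (j:ℤ) a) (hiter g (j:ℤ) b) ≤ δ := by
    intro j
    have hta := ((continuous_hiter g (j:ℤ)).tendsto a).comp ha
    have htb := ((continuous_hiter g (j:ℤ)).tendsto b).comp hb
    refine le_of_tendsto (hta.dist htb) ?_
    filter_upwards [eventually_ge_atTop j] with n hn
    exact h2 (φ n) j (hn.trans hφ.le_apply)
  obtain ⟨j, hj⟩ := hexp a b hab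
  exact absurd (hall j) (not_le.mpr hj)

lemma ucont_back [CompactSpace X] (g : X ≃ₜ X) (N : ℕ) (ε : ℝ) (hε : 0 < ε) :
    ∃ η > 0, η ≤ ε ∧ ∀ x y : X, dist x y ≤ η → ∀ n ≤ N,
      dist (hiter g (-(n:ℤ)) x) (hiter g (-(n:ℤ)) y) ≤ ε := by
  induction N with
  | zero =>
      refine ⟨ε, hε, le_refl _, fun x y hxy n hn => ?_⟩
      interval_cases n
      simpa [hiter_zero] using hxy
  | succ N ih =>
      obtain ⟨ηN, hηN, hηNε, hN⟩ := ih
      obtain ⟨η₁, hη₁, h₁⟩ := ucont_hiter g (-1) ηN hηN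
      refine ⟨min η₁ ηN, lt_min hη₁ hηN, (min_le_right _ _).trans hηNε, fun x y hxy n hn => ?_⟩
      match n with
      | 0 => simpa [hiter_zero] using hxy.trans ((min_le_right _ _).trans hηNε)
      | (m+1) =>
          have e : (-(↑(m+1):ℤ)) = (-(m:ℤ)) + (-1) := by push_cast; ring
          rw [e, hiter_add, hiter_add]
          exact hN _ _ (h₁ x y (hxy.trans (min_le_left _ _))) m (by omega)

lemma stability [CompactSpace X] (g : X ≃ₜ X) (δ : ℝ) (hδ : 0 < δ)
    (hexp : ∀ x y : X, x ≠ y → ∃ j : ℕ, δ < dist (hiter g (j:ℤ) x) (hiter g (j:ℤ) y))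
    (ε₀ : ℝ) (hε₀ : 0 < ε₀) :
    ∃ η > 0, ∀ x y : X, dist x y ≤ η → ∀ n : ℕ,
      dist (hiter g (-(n:ℤ)) x) (hiter g (-(n:ℤ)) y) ≤ ε₀ := by
  classical
  obtain ⟨ε₁, hε₁, h₁⟩ := ucont_hiter g (-1) δ hδ
  set ε := min ε₀ (min δ ε₁) with hεdef
  have hε : 0 < ε := lt_min hε₀ (lt_min hδ hε₁)
  have hεε₀ : ε ≤ ε₀ := min_le_left _ _
  have hεδ : ε ≤ δ := (min_le_right _ _).trans (min_le_left _ _)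
  have hεε₁ : ε ≤ ε₁ := (min_le_right _ _).trans (min_le_right _ _)
  obtain ⟨N, hN⟩ := unif_exp g δ hexp ε hε
  obtain ⟨η, hη, hηε, hback⟩ := ucont_back g N ε hε
  refine ⟨η, hη, fun x y hxy n => ?_⟩
  suffices h : ∀ m : ℕ, dist (hiter g (-(m:ℤ)) x) (hiter g (-(m:ℤ)) y) ≤ ε from
    (h n).trans hεε₀
  by_contra hcon
  push_neg at hcon
  have hex : ∃ m : ℕ, ε < dist (hiter g (-(m:ℤ)) x) (hiter g (-(m:ℤ)) y) := hcon
  set n₁ := Nat.find hex with hn₁def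
  have hfind : ε < dist (hiter g (-(n₁:ℤ)) x) (hiter g (-(n₁:ℤ)) y) := Nat.find_spec hex
  have hmin : ∀ m < n₁, dist (hiter g (-(m:ℤ)) x) (hiter g (-(m:ℤ)) y) ≤ ε := by
    intro m hm
    exact not_lt.mp (Nat.find_min hex hm)
  have hNn₁ : N < n₁ := by
    by_contra hle
    exact absurd (hback x y hxy n₁ (not_lt.mp hle)) (not_le.mpr hfind)
  obtain ⟨m₀, hm₀⟩ : ∃ m₀, n₁ = m₀ + 1 := ⟨n₁ - 1, by omega⟩
  have hδ₁ : dist (hiter g (-(n₁:ℤ)) x) (hiter g (-(n₁:ℤ)) y) ≤ δ := by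
    have e : (-(n₁:ℤ)) = (-1) + (-(m₀:ℤ)) := by rw [hm₀]; push_cast; ring
    rw [e, hiter_add, hiter_add]
    refine h₁ _ _ ?_
    exact (hmin m₀ (by omega)).trans hεε₁
  obtain ⟨j, hjN, hjd⟩ := hN (hiter g (-(n₁:ℤ)) x) (hiter g (-(n₁:ℤ)) y) (le_of_lt hfind)
  rcases Nat.eq_zero_or_pos j with hj0 | hjpos
  · subst hj0
    simp only [Nat.cast_zero, hiter_zero] at hjd
    exact absurd hδ₁ (not_le.mpr hjd)
  · have hjn : j < n₁ := by omega
    have e : (j:ℤ) + (-(n₁:ℤ)) = -(((n₁ - j : ℕ)):ℤ) := by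
      rw [Nat.cast_sub (le_of_lt hjn)]; ring
    rw [← hiter_add, ← hiter_add, e] at hjd
    have := (hmin (n₁ - j) (by omega)).trans hεδ
    exact absurd this (not_le.mpr hjd)

lemma recurrence [CompactSpace X] (g : X ≃ₜ X) (η₂ ε₂ θ : ℝ) (hη₂ : 0 < η₂)
    (hsum : ε₂ + η₂ + ε₂ ≤ θ)
    (hstab : ∀ x y : X, dist x y ≤ η₂ → ∀ n : ℕ,
      dist (hiter g (-(n:ℤ)) x) (hiter g (-(n:ℤ)) y) ≤ ε₂)
    (M : ℕ) :
    ∃ K ≥ M, ∀ z : X, dist (hiter g (-(K:ℤ)) z) z ≤ θ := by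
  classical
  rcases isEmpty_or_nonempty X with hX | hX
  · exact ⟨M, le_refl _, fun z => (IsEmpty.false z).elim⟩
  obtain ⟨t, _, htf, hcov⟩ := finite_cover_balls_of_compact (isCompact_univ (X := X))
    (show (0:ℝ) < η₂/2 by linarith)
  haveI : Finite ↑t := htf.to_subtype
  have hmem : ∀ (n : ℕ) (c : ↑t), ∃ c' ∈ t, hiter g (-(n:ℤ)) ↑c ∈ Metric.ball c' (η₂/2) := by
    intro n c
    have := hcov (mem_univ (hiter g (-(n:ℤ)) ↑c)); simpa using this
  choose Φ hΦt hΦ using hmem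
  set Ψ : ℕ → (↑t → ↑t) := fun n c => ⟨Φ n c, hΦt n c⟩ with hΨdef
  obtain ⟨v, hv⟩ := Finite.exists_infinite_fiber Ψ
  have hvS : (Ψ ⁻¹' {v}).Infinite := Set.infinite_coe_iff.mp hv
  obtain ⟨m, hm⟩ := hvS.nonempty
  obtain ⟨k, hk, hkgt⟩ := hvS.exists_gt (m + M)
  have hclose : ∀ c : ↑t, dist (hiter g (-(m:ℤ)) ↑c) (hiter g (-(k:ℤ)) ↑c) ≤ η₂ := by
    intro c
    have h1 := hΦ m c
    have h2 := hΦ k c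
    rw [Metric.mem_ball] at h1 h2
    have hveq : Ψ m c = Ψ k c := by
      have : Ψ m = v := hm
      have h2' : Ψ k = v := hk
      rw [this, h2']
    have hceq : Φ m c = Φ k c := congrArg Subtype.val hveq
    rw [hceq] at h1
    calc dist (hiter g (-(m:ℤ)) ↑c) (hiter g (-(k:ℤ)) ↑c)
        ≤ dist (hiter g (-(m:ℤ)) ↑c) (Φ k c) + dist (Φ k c) (hiter g (-(k:ℤ)) ↑c) :=
          dist_triangle _ _ _
      _ ≤ η₂/2 + η₂/2 :=
          add_le_add (le_of_lt h1) (le_of_lt (by rw [dist_comm]; exact h2))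
      _ = η₂ := by ring
  refine ⟨k - m, by omega, fun u => ?_⟩
  set w := hiter g (m:ℤ) u with hwdef
  have hwu : hiter g (-(m:ℤ)) w = u := by
    rw [hwdef, ← hiter_add]
    simp [hiter_zero]
  obtain ⟨c, hct, hcb⟩ : ∃ c ∈ t, w ∈ Metric.ball c (η₂/2) := by
    have := hcov (mem_univ w); simpa using this
  rw [Metric.mem_ball] at hcb
  have hwc : dist w c ≤ η₂ := by linarith
  have hs := hstab w c hwc
  have key : dist (hiter g (-(k:ℤ)) w) (hiter g (-(m:ℤ)) w) ≤ θ := by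
    calc dist (hiter g (-(k:ℤ)) w) (hiter g (-(m:ℤ)) w)
        ≤ dist (hiter g (-(k:ℤ)) w) (hiter g (-(k:ℤ)) c)
          + dist (hiter g (-(k:ℤ)) c) (hiter g (-(m:ℤ)) c)
          + dist (hiter g (-(m:ℤ)) c) (hiter g (-(m:ℤ)) w) := dist_triangle4 _ _ _ _
      _ ≤ ε₂ + η₂ + ε₂ := by
          have h1 := hs k
          have h3 := hs m
          have h5 := hclose ⟨c, hct⟩
          rw [dist_comm (hiter g (-(m:ℤ)) c) (hiter g (-(m:ℤ)) w)]
          rw [dist_comm (hiter g (-(k:ℤ)) c) (hiter g (-(m:ℤ)) c)]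
          exact add_le_add (add_le_add h1 h5) h3
      _ ≤ θ := hsum
  have hkk : hiter g (-(k:ℤ)) w = hiter g (-((k - m : ℕ):ℤ)) u := by
    rw [← hwu, ← hiter_add]
    congr 1
    · omega
    · exact hwu.symm
  rw [hkk, hwu] at key
  exact key

lemma pe_finite [CompactSpace X] (g : X ≃ₜ X) (δ : ℝ) (hδ : 0 < δ)
    (hexp : ∀ x y : X, x ≠ y → ∃ j : ℕ, δ < dist (hiter g (j:ℤ) x) (hiter g (j:ℤ) y)) :
    Finite X := by
  obtain ⟨η, hη, hstab⟩ := stability g δ hδ hexp δ hδ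
  set θ := η / 4 with hθdef
  have hθ : 0 < θ := by positivity
  obtain ⟨η₂, hη₂, hstab₂⟩ := stability g δ hδ hexp (min (θ/3) δ)
    (lt_min (by positivity) hδ)
  set η₂' := min η₂ (θ/3) with hη₂'def
  have hη₂' : 0 < η₂' := lt_min hη₂ (by positivity)
  have hrec := recurrence g η₂' (min (θ/3) δ) θ hη₂'
    (by
      have h1 : min (θ/3) δ ≤ θ/3 := min_le_left _ _
      have h2 : η₂' ≤ θ/3 := min_le_right _ _
      linarith)
    (fun x y hxy n => hstab₂ x y (hxy.trans (min_le_left _ _)) n)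
  have claim : ∀ x y : X, dist x y ≤ η / 2 → x = y := by
    intro x y hxy
    by_contra hne
    obtain ⟨j, hj⟩ := hexp x y hne
    obtain ⟨K, hKM, hK⟩ := hrec j
    have hx' : dist (hiter g (K:ℤ) x) x ≤ θ := by
      have := hK (hiter g (K:ℤ) x)
      rwa [← hiter_add, show (-(K:ℤ)) + (K:ℤ) = 0 by ring, hiter_zero, dist_comm] at this
    have hy' : dist (hiter g (K:ℤ) y) y ≤ θ := by
      have := hK (hiter g (K:ℤ) y)
      rwa [← hiter_add, show (-(K:ℤ)) + (K:ℤ) = 0 by ring, hiter_zero, dist_comm] at this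
    have hclose : dist (hiter g (K:ℤ) x) (hiter g (K:ℤ) y) ≤ η := by
      calc dist (hiter g (K:ℤ) x) (hiter g (K:ℤ) y)
          ≤ dist (hiter g (K:ℤ) x) x + dist x y + dist y (hiter g (K:ℤ) y) :=
            dist_triangle4 _ _ _ _
        _ ≤ θ + η/2 + θ := by
            have := dist_comm y (hiter g (K:ℤ) y)
            refine add_le_add (add_le_add hx' hxy) ?_
            rw [this]; exact hy'
        _ ≤ η := by rw [hθdef]; linarith
    have := hstab (hiter g (K:ℤ) x) (hiter g (K:ℤ) y) hclose (K - j)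
    rw [← hiter_add, ← hiter_add, show (-((K - j : ℕ):ℤ)) + (K:ℤ) = (j:ℤ) by omega] at this
    exact absurd this (not_le.mpr hj)
  refine finite_of_separated (η/2) (by positivity) fun x y hne => ?_
  by_contra hlt
  exact hne (claim x y (le_of_lt (not_le.mp hlt)))

/-- A set is `δ`-separated if distinct points are at distance `> δ`. -/
def IsSeparated' (δ : ℝ) (B : Set X) : Prop :=
  ∀ x ∈ B, ∀ y ∈ B, x ≠ y → δ < dist x y

/-- The `δ`-cardinality of a set: sup of cardinalities of `δ`-separated subsets. -/
noncomputable def dCard (δ : ℝ) (A : Set X) : ℕ∞ :=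
  ⨆ B ∈ {B : Set X | B ⊆ A ∧ IsSeparated' δ B}, B.encard

/-- `(m,n)`-expansiveness with a given expansive constant `δ`. -/
def MNExpansiveWith (f : X ≃ₜ X) (m n : ℕ) (δ : ℝ) : Prop :=
  ∀ A : Set X, A.encard = m → ∃ k : ℤ, (n : ℕ∞) < dCard δ (hiter f k '' A)

/-- `(m,n)`-expansiveness. -/
def MNExpansive (f : X ≃ₜ X) (m n : ℕ) : Prop :=
  ∃ δ > 0, MNExpansiveWith f m n δ

theorem stmt9 [CompactSpace X] (n : ℕ) (hn : 3 ≤ n) (f : X ≃ₜ X)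
    (hf : MNExpansive f (n + 1) n) : Finite X := by
  classical
  by_cases hfin : Finite X
  · exact hfin
  obtain ⟨δ, hδ, hfδ⟩ := hf
  by_cases hP : ∃ p q : X, p ≠ q ∧ ∀ k : ℤ, 0 ≤ k → dist (hiter f k p) (hiter f k q) ≤ δ
  · by_cases hQ : ∃ r s : X, r ≠ s ∧ ∀ k : ℤ, k ≤ 0 → dist (hiter f k r) (hiter f k s) ≤ δ
    · -- both one-sided close pairs exist: contradict expansiveness
      exfalso
      obtain ⟨p, q, hpq, hp⟩ := hP
      obtain ⟨r, s, hrs, hr⟩ := hQ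
      haveI : Infinite X := not_finite_iff_infinite.mp hfin
      set T₀ : Finset X := {p, q, r, s} with hT₀def
      have hT₀card : T₀.card ≤ 4 := by
        refine (Finset.card_insert_le _ _).trans (Nat.succ_le_succ ?_)
        refine (Finset.card_insert_le _ _).trans (Nat.succ_le_succ ?_)
        refine (Finset.card_insert_le _ _).trans (Nat.succ_le_succ ?_)
        simp
      have hinf : (Set.univ \ ↑T₀ : Set X).Infinite :=
        Set.infinite_univ.diff (T₀.finite_toSet)
      obtain ⟨u, huSub, hucard⟩ := hinf.exists_subset_card_eq (n + 1 - T₀.card)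
      have hdisj : Disjoint T₀ u := by
        rw [Finset.disjoint_left]
        intro a haT hau
        exact (huSub hau).2 haT
      set A : Set X := ↑(T₀ ∪ u) with hAdef
      have hAcard : (T₀ ∪ u).card = n + 1 := by
        rw [Finset.card_union_of_disjoint hdisj, hucard]
        omega
      have hAencard : A.encard = ((n + 1 : ℕ) : ℕ∞) := by
        rw [hAdef, Set.encard_coe_eq_coe_finsetCard, hAcard]
      obtain ⟨k, hk⟩ := hfδ A hAencard
      have hbound : dCard δ (hiter f k '' A) ≤ (n : ℕ∞) := by
        rw [dCard]
        refine iSup₂_le fun B hB => ?_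
        obtain ⟨hBsub, hBsep⟩ := hB
        by_contra hc
        push_neg at hc
        have hc' : (n : ℕ∞) + 1 ≤ B.encard :=
          (ENat.add_one_le_iff (by exact_mod_cast WithTop.coe_ne_top)).mpr hc
        have himg : (hiter f k '' A).encard = ((n + 1 : ℕ) : ℕ∞) := by
          rw [((hiter_injective f k).injOn).encard_image, hAencard]
        have hAfin : (hiter f k '' A).Finite := ((T₀ ∪ u).finite_toSet.image _)
        have hBeq : B = hiter f k '' A := by
          refine Set.Finite.eq_of_subset_of_encard_le' hAfin hBsub ?_
          rw [himg]
          exact_mod_cast le_trans (by push_cast; rfl) hc'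
        rcases le_or_gt 0 k with hk0 | hk0
        · have hpA : p ∈ A := by simp [hAdef, hT₀def]
          have hqA : q ∈ A := by simp [hAdef, hT₀def]
          have hmem1 : hiter f k p ∈ B := by rw [hBeq]; exact mem_image_of_mem _ hpA
          have hmem2 : hiter f k q ∈ B := by rw [hBeq]; exact mem_image_of_mem _ hqA
          have hne : hiter f k p ≠ hiter f k q := fun h => hpq (hiter_injective f k h)
          have := hBsep _ hmem1 _ hmem2 hne
          exact absurd (hp k hk0) (not_le.mpr this)
        · have hrA : r ∈ A := by simp [hAdef, hT₀def]
          have hsA : s ∈ A := by simp [hAdef, hT₀def]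
          have hmem1 : hiter f k r ∈ B := by rw [hBeq]; exact mem_image_of_mem _ hrA
          have hmem2 : hiter f k s ∈ B := by rw [hBeq]; exact mem_image_of_mem _ hsA
          have hne : hiter f k r ≠ hiter f k s := fun h => hrs (hiter_injective f k h)
          have := hBsep _ hmem1 _ hmem2 hne
          exact absurd (hr k (le_of_lt hk0)) (not_le.mpr this)
      exact absurd hk (not_lt.mpr hbound)
    · -- no negatively close pair : f.symm is positively expansive
      push_neg at hQ
      refine pe_finite f.symm δ hδ fun x y hxy => ?_
      obtain ⟨k, hk0, hkd⟩ := hQ x y hxy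
      refine ⟨(-k).toNat, ?_⟩
      rw [hiter_symm]
      have e : (-((((-k).toNat) : ℕ) : ℤ)) = k := by
        rw [Int.toNat_of_nonneg (by omega)]; ring
      rw [e]
      exact hkd
  · -- no positively close pair : f is positively expansive
    push_neg at hP
    refine pe_finite f δ hδ fun x y hxy => ?_
    obtain ⟨k, hk0, hkd⟩ := hP x y hxy
    refine ⟨k.toNat, ?_⟩
    rw [Int.toNat_of_nonneg hk0]
    exact hkd
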